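/- Let Φ be strictly stable, γ ∈ (0,1), and P̃ the solution of P̃ = γΦ^T P̃ Φ + C^T C. For vectors x_i = Φ^{i-N}(x_N − x^r) + x^r (i ≥ N), we have Σ_{i=N}^∞ γ^i ‖C x_i‖² = γ^N ‖x_N − x^r‖²_{P̃} + (γ^N/(1−γ)) ‖C x^r‖² + 2γ^N (x^r)^T C^T C (I − γΦ)^{-1} (x_N − x^r). -/

import Mathlib

open Matrix

/-- Euclidean norm of a vector in `ℝ^m`. -/
noncomputable def euclNorm {m : ℕ} (v : Fin m → ℝ) : ℝ := Real.sqrt (∑ j, v j ^ 2)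

open Filter

section SpectralBound

attribute [local instance] Matrix.linftyOpNormedRing Matrix.linftyOpNormedAlgebra

/-- Entries of powers of a strictly stable matrix decay geometrically. -/
theorem powEntryBound {n : ℕ} (Φ : Matrix (Fin n) (Fin n) ℝ)
    (hΦ : ∀ μ ∈ spectrum ℂ (Φ.map (algebraMap ℝ ℂ)), ‖μ‖ < 1) :
    ∃ r : ℝ, 0 < r ∧ r < 1 ∧ ∀ᶠ k in atTop, ∀ i j, |(Φ ^ k) i j| ≤ r ^ k := by
  haveI : CompleteSpace (Matrix (Fin n) (Fin n) ℂ) := FiniteDimensional.complete ℂ _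
  set B := Φ.map (algebraMap ℝ ℂ) with hB
  have hfin := Matrix.finite_spectrum (R := ℂ) B
  have hρ : spectralRadius ℂ B < 1 := by
    rw [spectralRadius]
    have hmem : ∀ μ, μ ∈ spectrum ℂ B ↔ μ ∈ hfin.toFinset := fun μ =>
      (Set.Finite.mem_toFinset _).symm
    calc ⨆ μ ∈ spectrum ℂ B, (‖μ‖₊ : ENNReal)
        = hfin.toFinset.sup (fun μ => (‖μ‖₊ : ENNReal)) := by
          rw [Finset.sup_eq_iSup]
          exact iSup_congr fun μ => by rw [hmem]
      _ < 1 := by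
          rw [Finset.sup_lt_iff (by simp : (⊥ : ENNReal) < 1)]
          intro μ hμ
          have := hΦ μ (hfin.mem_toFinset.mp hμ)
          exact_mod_cast (by exact_mod_cast this : ‖μ‖₊ < 1)
  obtain ⟨c, hc1, hc2⟩ := exists_between hρ
  have hc0 : 0 < c := lt_of_le_of_lt zero_le hc1
  have hct : c ≠ ⊤ := (hc2.trans_le le_top).ne
  have htend := spectrum.pow_nnnorm_pow_one_div_tendsto_nhds_spectralRadius B
  have hev : ∀ᶠ k : ℕ in atTop, ((‖B ^ k‖₊ : ENNReal)) ^ (1 / (k : ℝ)) < c :=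
    htend.eventually_lt_const hc1
  refine ⟨c.toReal, ENNReal.toReal_pos hc0.ne' hct, ?_, ?_⟩
  · have := ENNReal.toReal_mono (by simp) hc2.le
    simp at this
    rcases lt_or_eq_of_le this with h | h
    · exact h
    · exfalso; rw [← ENNReal.ofReal_toReal hct, h] at hc2; simp at hc2
  · filter_upwards [hev, eventually_ge_atTop 1] with k hk hk1 i j
    have hk0 : (k : ℝ) ≠ 0 := by positivity
    have hxx : ((‖B ^ k‖₊ : ENNReal)) = (((‖B ^ k‖₊ : ENNReal)) ^ (1 / (k : ℝ))) ^ (k : ℝ) := by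
      rw [← ENNReal.rpow_mul, one_div, inv_mul_cancel₀ hk0, ENNReal.rpow_one]
    have hle : ((‖B ^ k‖₊ : ENNReal)) ≤ c ^ (k : ℕ) := by
      rw [← ENNReal.rpow_natCast c k, hxx]
      exact ENNReal.rpow_le_rpow hk.le (by positivity)
    have hnorm : ‖B ^ k‖ ≤ c.toReal ^ k := by
      have := ENNReal.toReal_mono (by simp [ENNReal.pow_ne_top hct]) hle
      simpa [ENNReal.toReal_pow] using this
    -- entry bound
    have hBk : B ^ k = (Φ ^ k).map (algebraMap ℝ ℂ) := by
      rw [hB, ← RingHom.mapMatrix_apply, ← RingHom.mapMatrix_apply, map_pow]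
    have hentry : ‖(B ^ k) i j‖ ≤ ‖B ^ k‖ := by
      rw [Matrix.linfty_opNorm_def]
      calc ‖(B ^ k) i j‖ ≤ ∑ j', ‖(B ^ k) i j'‖ :=
            Finset.single_le_sum (f := fun j' => ‖(B ^ k) i j'‖)
              (fun _ _ => norm_nonneg _) (Finset.mem_univ j)
        _ ≤ _ := by
            have h1 : (∑ j', ‖(B ^ k) i j'‖₊) ≤ Finset.univ.sup fun i => ∑ j, ‖(B ^ k) i j‖₊ :=
              Finset.le_sup (f := fun i => ∑ j, ‖(B ^ k) i j‖₊) (Finset.mem_univ i)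
            have h2 := NNReal.coe_le_coe.mpr h1
            simpa [NNReal.coe_sum] using h2
    have : ‖(B ^ k) i j‖ = |(Φ ^ k) i j| := by
      rw [hBk]; simp [Matrix.map_apply]
    rw [this] at hentry
    exact hentry.trans hnorm

end SpectralBound

section Helpers

private lemma summable_matrix {a b : ℕ} {f : ℕ → Matrix (Fin a) (Fin b) ℝ}
    (h : ∀ i j, Summable fun k => f k i j) : Summable f :=
  Pi.summable.2 fun i => Pi.summable.2 fun j => h i j

private lemma summable_of_abs_bounded {f g : ℕ → ℝ} (hg : Summable g)
    (h : ∀ᶠ k in atTop, |f k| ≤ g k) : Summable f :=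
  Summable.of_norm_bounded_eventually hg (by rwa [Nat.cofinite_eq_atTop])

private lemma dot_mulVec_left {a b : ℕ} (A : Matrix (Fin a) (Fin b) ℝ)
    (p : Fin b → ℝ) (q : Fin a → ℝ) :
    (A *ᵥ p) ⬝ᵥ q = p ⬝ᵥ Aᵀ *ᵥ q := by
  rw [Matrix.dotProduct_mulVec, Matrix.vecMul_transpose, dotProduct_comm]

private lemma quad_continuous {a b : ℕ} (u : Fin a → ℝ) (v : Fin b → ℝ) :
    Continuous fun M : Matrix (Fin a) (Fin b) ℝ => u ⬝ᵥ M *ᵥ v := by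
  show Continuous fun M : Matrix (Fin a) (Fin b) ℝ => ∑ i, u i * ∑ j, M i j * v j
  refine continuous_finset_sum _ fun i _ => continuous_const.mul ?_
  refine continuous_finset_sum _ fun j _ => Continuous.mul ?_ continuous_const
  exact (continuous_apply j).comp (continuous_apply (A := fun _ : Fin a => Fin b → ℝ) i)

/-- The bilinear pairing `M ↦ u ⬝ᵥ M *ᵥ v` as an additive monoid hom. -/
private def quadHom {a b : ℕ} (u : Fin a → ℝ) (v : Fin b → ℝ) :
    Matrix (Fin a) (Fin b) ℝ →+ ℝ where
  toFun M := u ⬝ᵥ M *ᵥ v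
  map_zero' := by simp
  map_add' M N := by simp [Matrix.add_mulVec, dotProduct_add]

private lemma euclNorm_sq {m : ℕ} (v : Fin m → ℝ) : euclNorm v ^ 2 = ∑ j, v j ^ 2 :=
  Real.sq_sqrt (Finset.sum_nonneg fun _ _ => sq_nonneg _)

private lemma entry_prod_bound {n : ℕ} (A : Matrix (Fin n) (Fin n) ℝ)
    (Dm : Matrix (Fin n) (Fin n) ℝ) {t : ℝ} (ht : 0 ≤ t)
    (hA : ∀ i j, |A i j| ≤ t) (i j : Fin n) :
    |(Aᵀ * Dm * A) i j| ≤ (∑ q, ∑ p, |Dm p q|) * (t * t) := by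
  have hrw : (Aᵀ * Dm * A) i j = ∑ q, (∑ p, A p i * Dm p q) * A q j := by
    simp [Matrix.mul_apply, Matrix.transpose_apply]
  rw [hrw]
  calc |∑ q, (∑ p, A p i * Dm p q) * A q j|
      ≤ ∑ q, |(∑ p, A p i * Dm p q) * A q j| := Finset.abs_sum_le_sum_abs _ _
    _ ≤ ∑ q, (∑ p, t * |Dm p q|) * t := by
        refine Finset.sum_le_sum fun q _ => ?_
        rw [abs_mul]
        refine mul_le_mul ?_ (hA q j) (abs_nonneg _)
          (Finset.sum_nonneg fun p _ => by positivity)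
        calc |∑ p, A p i * Dm p q| ≤ ∑ p, |A p i * Dm p q| := Finset.abs_sum_le_sum_abs _ _
          _ ≤ ∑ p, t * |Dm p q| := Finset.sum_le_sum fun p _ => by
              rw [abs_mul]; exact mul_le_mul_of_nonneg_right (hA p i) (abs_nonneg _)
    _ = (∑ q, ∑ p, |Dm p q|) * (t * t) := by
        simp only [← Finset.sum_mul, ← Finset.mul_sum]
        ring

end Helpers

/-- For strictly stable `Φ`, `γ ∈ (0,1)`, `P̃ = ∑ γ^i (Φ^i)ᵀ Cᵀ C Φ^i`, and the
trajectory `x_i = Φ^{i-N}(x_N - x^r) + x^r` for `i ≥ N`, we have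
`∑_{i=N}^∞ γ^i ‖C x_i‖² = γ^N ‖x_N - x^r‖²_{P̃} + (γ^N/(1-γ)) ‖C x^r‖²
  + 2 γ^N (x^r)ᵀ Cᵀ C (I - γΦ)⁻¹ (x_N - x^r)`. -/
theorem stmt4 {n m : ℕ} (Φ : Matrix (Fin n) (Fin n) ℝ) (C : Matrix (Fin m) (Fin n) ℝ)
    (γ : ℝ) (hγ : γ ∈ Set.Ioo (0 : ℝ) 1)
    (hΦ : ∀ μ ∈ spectrum ℂ (Φ.map (algebraMap ℝ ℂ)), ‖μ‖ < 1)
    (N : ℕ) (xN xr : Fin n → ℝ) (x : ℕ → Fin n → ℝ)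
    (hx : ∀ i : ℕ, x (N + i) = (Φ ^ i).mulVec (xN - xr) + xr)
    (P : Matrix (Fin n) (Fin n) ℝ)
    (hP : P = ∑' i : ℕ, γ ^ i • ((Φ ^ i)ᵀ * Cᵀ * C * Φ ^ i)) :
    (∑' i : ℕ, γ ^ (N + i) * euclNorm (C.mulVec (x (N + i))) ^ 2) =
      γ ^ N * ((xN - xr) ⬝ᵥ P.mulVec (xN - xr))
        + (γ ^ N / (1 - γ)) * euclNorm (C.mulVec xr) ^ 2
        + 2 * γ ^ N * (xr ⬝ᵥ (Cᵀ * C * (1 - γ • Φ)⁻¹).mulVec (xN - xr)) := by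
  obtain ⟨hγ0, hγ1⟩ := hγ
  obtain ⟨r, hr0, hr1, hev⟩ := powEntryBound Φ hΦ
  set e : Fin n → ℝ := xN - xr with he
  set D : Matrix (Fin n) (Fin n) ℝ := Cᵀ * C with hD
  set K : ℝ := ∑ q, ∑ p, |D p q| with hK
  have hK0 : 0 ≤ K := Finset.sum_nonneg fun _ _ => Finset.sum_nonneg fun _ _ => abs_nonneg _
  have hassoc : ∀ k : ℕ, (Φ ^ k)ᵀ * Cᵀ * C * Φ ^ k = (Φ ^ k)ᵀ * D * Φ ^ k := by
    intro k; rw [hD, Matrix.mul_assoc ((Φ ^ k)ᵀ) Cᵀ C]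
  -- summability of the quadratic matrix family
  have hmat : Summable (fun k : ℕ => γ ^ k • ((Φ ^ k)ᵀ * Cᵀ * C * Φ ^ k)) := by
    refine summable_matrix fun i j => ?_
    refine summable_of_abs_bounded
      (((summable_geometric_of_lt_one (by positivity) (by nlinarith)).mul_left K)
        : Summable fun k : ℕ => K * (γ * (r * r)) ^ k) ?_
    filter_upwards [hev] with k hk
    have hb := entry_prod_bound (Φ ^ k) D (by positivity : (0:ℝ) ≤ r ^ k) hk i j
    rw [← hassoc] at hb
    have habs : |(γ ^ k • ((Φ ^ k)ᵀ * Cᵀ * C * Φ ^ k)) i j|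
        = γ ^ k * |((Φ ^ k)ᵀ * Cᵀ * C * Φ ^ k) i j| := by
      have hrfl : (γ ^ k • ((Φ ^ k)ᵀ * Cᵀ * C * Φ ^ k)) i j
          = γ ^ k * ((Φ ^ k)ᵀ * Cᵀ * C * Φ ^ k) i j := rfl
      rw [hrfl, abs_mul, abs_of_nonneg (by positivity : (0:ℝ) ≤ γ ^ k)]
    rw [habs]
    calc γ ^ k * |((Φ ^ k)ᵀ * Cᵀ * C * Φ ^ k) i j| ≤ γ ^ k * (K * (r ^ k * r ^ k)) := by
          exact mul_le_mul_of_nonneg_left hb (by positivity)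
      _ = K * (γ * (r * r)) ^ k := by rw [mul_pow, mul_pow]; ring
  -- summability of the geometric matrix family
  have hgeo : Summable (fun k : ℕ => γ ^ k • Φ ^ k) := by
    refine summable_matrix fun i j => ?_
    refine summable_of_abs_bounded
      ((summable_geometric_of_lt_one (by positivity) (by nlinarith)
        : Summable fun k : ℕ => (γ * r) ^ k)) ?_
    filter_upwards [hev] with k hk
    have hrfl : (γ ^ k • Φ ^ k) i j = γ ^ k * (Φ ^ k) i j := rfl
    rw [hrfl, abs_mul, mul_pow, abs_of_nonneg (by positivity : (0:ℝ) ≤ γ ^ k)]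
    exact mul_le_mul_of_nonneg_left (hk i j) (by positivity)
  set S : Matrix (Fin n) (Fin n) ℝ := ∑' k : ℕ, γ ^ k • Φ ^ k with hS
  have hSsum : HasSum (fun k : ℕ => γ ^ k • Φ ^ k) S := hgeo.hasSum
  have hPsum : HasSum (fun k : ℕ => γ ^ k • ((Φ ^ k)ᵀ * Cᵀ * C * Φ ^ k)) P := by
    rw [hP]; exact hmat.hasSum
  -- the inverse is the geometric series
  have hinv : (1 - γ • Φ)⁻¹ = S := by
    apply Matrix.inv_eq_right_inv
    have hshift : HasSum (fun k : ℕ => γ ^ (k + 1) • Φ ^ (k + 1)) (S - 1) := by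
      rw [hasSum_nat_add_iff (f := fun k : ℕ => γ ^ k • Φ ^ k) 1]
      simpa using hSsum
    have hmap : HasSum (fun k : ℕ => (γ • Φ) * (γ ^ k • Φ ^ k)) ((γ • Φ) * S) :=
      hSsum.map (AddMonoidHom.mulLeft (γ • Φ)) (continuous_const.matrix_mul continuous_id)
    have hsame : (fun k : ℕ => (γ • Φ) * (γ ^ k • Φ ^ k)) =
        fun k : ℕ => γ ^ (k + 1) • Φ ^ (k + 1) := by
      funext k
      rw [smul_mul_smul_comm, ← pow_succ', ← pow_succ']
    rw [hsame] at hmap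
    have : (γ • Φ) * S = S - 1 := hmap.unique hshift
    rw [sub_mul, one_mul, this]
    abel
  -- scalar HasSums
  have hQ : HasSum (fun k : ℕ => γ ^ k * (e ⬝ᵥ ((Φ ^ k)ᵀ * Cᵀ * C * Φ ^ k) *ᵥ e))
      (e ⬝ᵥ P *ᵥ e) := by
    have := hPsum.map (quadHom e e) (quad_continuous e e)
    simpa [quadHom, Function.comp_def, Matrix.smul_mulVec, dotProduct_smul,
      smul_eq_mul] using this
  have hX : HasSum (fun k : ℕ => γ ^ k * (xr ⬝ᵥ (D * Φ ^ k) *ᵥ e)) (xr ⬝ᵥ (D * S) *ᵥ e) := by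
    have := hSsum.map ((quadHom xr e).comp (AddMonoidHom.mulLeft D))
      ((quad_continuous xr e).comp (continuous_const.matrix_mul continuous_id))
    simpa [quadHom, Function.comp_def, mul_smul_comm, Matrix.smul_mulVec,
      dotProduct_smul, smul_eq_mul] using this
  set cst : ℝ := ∑ j, (C *ᵥ xr) j ^ 2 with hcst
  have hB : HasSum (fun k : ℕ => (γ ^ N * cst) * γ ^ k) ((γ ^ N * cst) * (1 - γ)⁻¹) :=
    (hasSum_geometric_of_lt_one hγ0.le hγ1).mul_left _
  have hA : HasSum (fun k : ℕ => γ ^ N * (γ ^ k * (e ⬝ᵥ ((Φ ^ k)ᵀ * Cᵀ * C * Φ ^ k) *ᵥ e)))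
      (γ ^ N * (e ⬝ᵥ P *ᵥ e)) := hQ.mul_left _
  have hC : HasSum (fun k : ℕ => (2 * γ ^ N) * (γ ^ k * (xr ⬝ᵥ (D * Φ ^ k) *ᵥ e)))
      ((2 * γ ^ N) * (xr ⬝ᵥ (D * S) *ᵥ e)) := hX.mul_left _
  -- pointwise decomposition of the summand
  have hterm : ∀ k : ℕ, γ ^ (N + k) * euclNorm (C *ᵥ x (N + k)) ^ 2 =
      γ ^ N * (γ ^ k * (e ⬝ᵥ ((Φ ^ k)ᵀ * Cᵀ * C * Φ ^ k) *ᵥ e))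
      + (γ ^ N * cst) * γ ^ k
      + (2 * γ ^ N) * (γ ^ k * (xr ⬝ᵥ (D * Φ ^ k) *ᵥ e)) := by
    intro k
    rw [hx k, euclNorm_sq, Matrix.mulVec_add]
    set u : Fin n → ℝ := Φ ^ k *ᵥ e with hu
    have hsplit : ∑ j, ((C *ᵥ u) + (C *ᵥ xr)) j ^ 2 =
        (C *ᵥ u) ⬝ᵥ (C *ᵥ u) + 2 * ((C *ᵥ xr) ⬝ᵥ (C *ᵥ u)) + cst := by
      have hdot : ∀ a b : Fin m → ℝ, a ⬝ᵥ b = ∑ j, a j * b j := fun a b => rfl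
      rw [hdot, hdot, hcst, Finset.mul_sum, ← Finset.sum_add_distrib, ← Finset.sum_add_distrib]
      refine Finset.sum_congr rfl fun j _ => ?_
      simp only [Pi.add_apply]
      ring
    have hq : (C *ᵥ u) ⬝ᵥ (C *ᵥ u) = e ⬝ᵥ ((Φ ^ k)ᵀ * Cᵀ * C * Φ ^ k) *ᵥ e := by
      rw [dot_mulVec_left, Matrix.mulVec_mulVec, hu, Matrix.mulVec_mulVec,
        dot_mulVec_left, Matrix.mulVec_mulVec,
        ← Matrix.mul_assoc ((Φ ^ k)ᵀ) (Cᵀ * C) (Φ ^ k), ← Matrix.mul_assoc ((Φ ^ k)ᵀ) Cᵀ C]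
    have hcross : (C *ᵥ xr) ⬝ᵥ (C *ᵥ u) = xr ⬝ᵥ (D * Φ ^ k) *ᵥ e := by
      rw [dot_mulVec_left, Matrix.mulVec_mulVec, hu, Matrix.mulVec_mulVec, ← hD]
    rw [hsplit, hq, hcross, pow_add]
    ring
  -- assemble
  have htotal := (hA.add hB).add hC
  calc (∑' i : ℕ, γ ^ (N + i) * euclNorm (C *ᵥ x (N + i)) ^ 2)
      = γ ^ N * (e ⬝ᵥ P *ᵥ e) + (γ ^ N * cst) * (1 - γ)⁻¹
          + (2 * γ ^ N) * (xr ⬝ᵥ (D * S) *ᵥ e) := by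
        rw [tsum_congr hterm]
        exact htotal.tsum_eq
    _ = _ := by
        rw [hinv, euclNorm_sq (C *ᵥ xr), ← hcst, div_eq_mul_inv]
        ring
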